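/- Let n ≥ 1, 0 < β < 1, 0 < α₁ ≤ α₂, and ε ≥ 0. Let Φ: ℝⁿ → ℝⁿ be continuously differentiable and let M be a continuous map from ℝⁿ to the n×n real symmetric matrices with α₁‖v‖² ≤ vᵀ M(x) v ≤ α₂‖v‖² for all x, v, and DΦ(x)ᵀ M(Φ(x)) DΦ(x) ⪯ (1−β) M(x) for all x. Let (x_k), (y_k) be sequences in ℝⁿ with x_{k+1} = Φ(x_k) + w_k, ‖w_k‖ ≤ ε for all k, and y_{k+1} = Φ(y_k). Then limsup_{k→∞} ‖x_k − y_k‖ ≤ (√α₂/√α₁) · ε / (1 − √(1−β)). -/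

import Mathlib

open Matrix

/-- The Euclidean norm of a vector in `ℝⁿ`. -/
noncomputable def euclNorm {n : ℕ} (v : Fin n → ℝ) : ℝ :=
  Real.sqrt (v ⬝ᵥ v)

lemma euclNorm_eq_norm {n : ℕ} (v : Fin n → ℝ) :
    euclNorm v = ‖(EuclideanSpace.equiv (Fin n) ℝ).symm v‖ := by
  rw [EuclideanSpace.norm_eq, euclNorm]
  congr 1
  simp only [dotProduct]
  congr 1; ext i
  have : ((EuclideanSpace.equiv (Fin n) ℝ).symm v) i = v i := rfl
  rw [this, Real.norm_eq_abs, sq_abs, sq]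

lemma euclNorm_nonneg {n : ℕ} (v : Fin n → ℝ) : 0 ≤ euclNorm v := Real.sqrt_nonneg _

lemma euclNorm_add_le {n : ℕ} (a b : Fin n → ℝ) :
    euclNorm (a + b) ≤ euclNorm a + euclNorm b := by
  simp only [euclNorm_eq_norm, map_add]
  exact norm_add_le _ _

lemma euclNorm_sub_le {n : ℕ} (a b c : Fin n → ℝ) :
    euclNorm (a - c) ≤ euclNorm (a - b) + euclNorm (b - c) := by
  have h : a - c = (a - b) + (b - c) := by abel
  rw [h]; exact euclNorm_add_le _ _

lemma euclNorm_sub_le_integral {n : ℕ} (γ γ' : ℝ → Fin n → ℝ)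
    (hd : ∀ t, HasDerivAt γ (γ' t) t) (hc : Continuous γ') :
    euclNorm (γ 1 - γ 0) ≤ ∫ t in (0:ℝ)..1, euclNorm (γ' t) := by
  set e := EuclideanSpace.equiv (Fin n) ℝ
  have hd' : ∀ t : ℝ, HasDerivAt (fun s => e.symm (γ s)) (e.symm (γ' t)) t := fun t =>
    (e.symm.toContinuousLinearMap.hasFDerivAt).comp_hasDerivAt t (hd t)
  have hcont : Continuous fun t => e.symm (γ' t) := e.symm.continuous.comp hc
  have hint : IntervalIntegrable (fun t => e.symm (γ' t)) MeasureTheory.volume 0 1 :=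
    hcont.intervalIntegrable _ _
  have heq : ∫ t in (0:ℝ)..1, e.symm (γ' t) = e.symm (γ 1) - e.symm (γ 0) :=
    intervalIntegral.integral_eq_sub_of_hasDerivAt (fun t _ => hd' t) hint
  have h1 : euclNorm (γ 1 - γ 0) = ‖∫ t in (0:ℝ)..1, e.symm (γ' t)‖ := by
    rw [heq, euclNorm_eq_norm, map_sub]
  rw [h1]
  calc ‖∫ t in (0:ℝ)..1, e.symm (γ' t)‖ ≤ ∫ t in (0:ℝ)..1, ‖e.symm (γ' t)‖ :=
        intervalIntegral.norm_integral_le_integral_norm zero_le_one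
    _ = ∫ t in (0:ℝ)..1, euclNorm (γ' t) := by
        congr 1; ext t; rw [euclNorm_eq_norm]

lemma chain_telescope {n : ℕ} (m : ℕ) (γ : ℕ → ℝ → (Fin n → ℝ)) (b : ℕ → ℝ)
    (hmatch : ∀ i, i + 1 < m → γ (i+1) 0 = γ i 1)
    (hlen : ∀ i, i < m → euclNorm (γ i 1 - γ i 0) ≤ b i) :
    ∀ j, j < m → euclNorm (γ j 1 - γ 0 0) ≤ ∑ i ∈ Finset.range (j+1), b i := by
  intro j
  induction j with
  | zero => intro hj; simpa using hlen 0 hj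
  | succ j ih =>
    intro hj
    have hj' : j < m := Nat.lt_of_succ_lt hj
    calc euclNorm (γ (j+1) 1 - γ 0 0)
        ≤ euclNorm (γ (j+1) 1 - γ (j+1) 0) + euclNorm (γ (j+1) 0 - γ 0 0) :=
          euclNorm_sub_le _ _ _
      _ ≤ b (j+1) + ∑ i ∈ Finset.range (j+1), b i := by
          refine add_le_add (hlen _ hj) ?_
          rw [hmatch j hj]
          exact ih hj'
      _ = ∑ i ∈ Finset.range (j+2), b i := by
          simp only [Finset.sum_range_succ]
          ring

lemma sqrtForm_add_le {n : ℕ} (A : Matrix (Fin n) (Fin n) ℝ) (hA : A.PosSemidef)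
    (u v : Fin n → ℝ) :
    Real.sqrt ((u + v) ⬝ᵥ A.mulVec (u + v)) ≤
      Real.sqrt (u ⬝ᵥ A.mulVec u) + Real.sqrt (v ⬝ᵥ A.mulVec v) := by
  obtain ⟨B, rfl⟩ : ∃ B : Matrix (Fin n) (Fin n) ℝ, A = Bᴴ * B := by
    open scoped MatrixOrder in exact CStarAlgebra.nonneg_iff_eq_star_mul_self.mp hA.nonneg
  have key : ∀ z : Fin n → ℝ, Real.sqrt (z ⬝ᵥ (Bᴴ * B).mulVec z) = euclNorm (B *ᵥ z) := by
    intro z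
    rw [show (Bᴴ * B).mulVec z = Bᴴ *ᵥ (B *ᵥ z) from (Matrix.mulVec_mulVec _ _ _).symm,
      Matrix.dotProduct_mulVec]
    have hB : Bᴴ = Bᵀ := by ext i j; simp [Matrix.conjTranspose_apply]
    rw [hB, Matrix.vecMul_transpose, euclNorm]
  rw [key, key, key, Matrix.mulVec_add]
  exact euclNorm_add_le _ _

lemma conj_dotProduct {n : ℕ} (Jm A : Matrix (Fin n) (Fin n) ℝ) (v : Fin n → ℝ) :
    v ⬝ᵥ (Jmᵀ * A * Jm).mulVec v = (Jm *ᵥ v) ⬝ᵥ A.mulVec (Jm *ᵥ v) := by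
  rw [show (Jmᵀ * A * Jm).mulVec v = Jmᵀ *ᵥ (A *ᵥ (Jm *ᵥ v)) by
      rw [Matrix.mulVec_mulVec, Matrix.mulVec_mulVec, Matrix.mul_assoc],
    Matrix.dotProduct_mulVec, Matrix.vecMul_transpose]

/-- bounded tracking, Proposition 3(i) + Lemma 2: for a contracting C¹
map `Φ` (Jacobian `J(x) = DΦ(x)`, continuous uniformly bounded symmetric metric `M`,
contraction condition `DΦ(x)ᵀ M(Φ(x)) DΦ(x) ⪯ (1-β) M(x)` with `0 < β < 1`), a
trajectory `x_{k+1} = Φ(x_k) + w_k` with `‖w_k‖ ≤ ε` tracks the unperturbed trajectory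
`y_{k+1} = Φ(y_k)` with `limsup_k ‖x_k - y_k‖ ≤ (√α₂/√α₁) ε / (1 - √(1-β))`. -/
theorem bounded_perturbation_tracking_limsup_bound
    (n : ℕ) (hn : 1 ≤ n) (β α₁ α₂ ε : ℝ)
    (hβ0 : 0 < β) (hβ1 : β < 1) (hα₁ : 0 < α₁) (hα₁₂ : α₁ ≤ α₂) (hε : 0 ≤ ε)
    (Φ : (Fin n → ℝ) → Fin n → ℝ) (hΦ : ContDiff ℝ 1 Φ)
    (J : (Fin n → ℝ) → Matrix (Fin n) (Fin n) ℝ)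
    (hJ : ∀ x, HasFDerivAt Φ (J x).mulVecLin.toContinuousLinearMap x)
    (M : (Fin n → ℝ) → Matrix (Fin n) (Fin n) ℝ)
    (hMcont : Continuous M) (hMsym : ∀ x, (M x).IsHermitian)
    (hMlb : ∀ x (v : Fin n → ℝ), α₁ * (euclNorm v) ^ 2 ≤ v ⬝ᵥ (M x).mulVec v)
    (hMub : ∀ x (v : Fin n → ℝ), v ⬝ᵥ (M x).mulVec v ≤ α₂ * (euclNorm v) ^ 2)
    (hcontr : ∀ x, ((1 - β) • M x - (J x)ᵀ * M (Φ x) * J x).PosSemidef)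
    (x y : ℕ → Fin n → ℝ) (w : ℕ → Fin n → ℝ)
    (hx : ∀ k, x (k + 1) = Φ (x k) + w k)
    (hw : ∀ k, euclNorm (w k) ≤ ε)
    (hy : ∀ k, y (k + 1) = Φ (y k)) :
    Filter.limsup (fun k => euclNorm (x k - y k)) Filter.atTop ≤
      Real.sqrt α₂ / Real.sqrt α₁ * ε / (1 - Real.sqrt (1 - β)) := by
  have hα₂ : (0:ℝ) < α₂ := lt_of_lt_of_le hα₁ hα₁₂
  set c : ℝ := Real.sqrt (1 - β) with hc_def
  have hβ' : (0:ℝ) ≤ 1 - β := by linarith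
  have hc0 : 0 ≤ c := Real.sqrt_nonneg _
  have hc1 : c < 1 := by
    rw [hc_def]
    nlinarith [Real.sq_sqrt hβ', Real.sqrt_nonneg (1 - β)]
  set D : ℝ := Real.sqrt α₂ * ε with hD_def
  have hD0 : 0 ≤ D := mul_nonneg (Real.sqrt_nonneg _) hε
  set A : ℝ := Real.sqrt α₂ * euclNorm (x 0 - y 0) with hA_def
  set L : ℕ → ℝ := fun k => c ^ k * A + D * ∑ i ∈ Finset.range k, c ^ i with hL_def
  have hLrec : ∀ k, L (k + 1) = c * L k + D := by
    intro k
    simp only [hL_def, geom_sum_succ, pow_succ]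
    ring
  -- local length functional
  set Len : (ℝ → Fin n → ℝ) → (ℝ → Fin n → ℝ) → ℝ := fun γ γ' =>
    ∫ t in (0:ℝ)..1, Real.sqrt (γ' t ⬝ᵥ (M (γ t)).mulVec (γ' t)) with hLen_def
  have integrand_cont : ∀ (γ γ' : ℝ → Fin n → ℝ), Continuous γ → Continuous γ' →
      Continuous fun t => Real.sqrt (γ' t ⬝ᵥ (M (γ t)).mulVec (γ' t)) := by
    intro γ γ' hg hg'
    exact Real.continuous_sqrt.comp
      (hg'.dotProduct ((hMcont.comp hg).matrix_mulVec hg'))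
  have sqrt_lb : ∀ (z v : Fin n → ℝ),
      Real.sqrt α₁ * euclNorm v ≤ Real.sqrt (v ⬝ᵥ (M z).mulVec v) := by
    intro z v
    have h1 : Real.sqrt α₁ * euclNorm v = Real.sqrt (α₁ * (euclNorm v) ^ 2) := by
      rw [Real.sqrt_mul hα₁.le, Real.sqrt_sq (euclNorm_nonneg v)]
    rw [h1]
    exact Real.sqrt_le_sqrt (hMlb z v)
  have sqrt_ub : ∀ (z v : Fin n → ℝ),
      Real.sqrt (v ⬝ᵥ (M z).mulVec v) ≤ Real.sqrt α₂ * euclNorm v := by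
    intro z v
    have h1 : Real.sqrt α₂ * euclNorm v = Real.sqrt (α₂ * (euclNorm v) ^ 2) := by
      rw [Real.sqrt_mul hα₂.le, Real.sqrt_sq (euclNorm_nonneg v)]
    rw [h1]
    exact Real.sqrt_le_sqrt (hMub z v)
  -- segment length bound
  have seg_deriv : ∀ (a v : Fin n → ℝ) (t : ℝ),
      HasDerivAt (fun s : ℝ => a + s • v) v t := by
    intro a v t
    simpa using ((hasDerivAt_id t).smul_const v).const_add a
  have seg_cont : ∀ (a v : Fin n → ℝ), Continuous fun s : ℝ => a + s • v := by
    intro a v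
    exact continuous_const.add (continuous_id.smul continuous_const)
  have seg_len : ∀ (a v : Fin n → ℝ),
      Len (fun s : ℝ => a + s • v) (fun _ => v) ≤ Real.sqrt α₂ * euclNorm v := by
    intro a v
    have hci := integrand_cont (fun s : ℝ => a + s • v) (fun _ => v) (seg_cont a v)
      continuous_const
    calc Len (fun s : ℝ => a + s • v) (fun _ => v)
        ≤ ∫ _t in (0:ℝ)..1, Real.sqrt α₂ * euclNorm v := by
          refine intervalIntegral.integral_mono zero_le_one
            (hci.intervalIntegrable _ _)
            (intervalIntegrable_const) (fun t => sqrt_ub _ _)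
      _ = Real.sqrt α₂ * euclNorm v := by simp
  -- main induction: existence of chains of paths
  have claim : ∀ k, ∃ m : ℕ, ∃ γ γ' : ℕ → ℝ → (Fin n → ℝ),
      1 ≤ m ∧
      (∀ i, i < m → ∀ t, HasDerivAt (γ i) (γ' i t) t) ∧
      (∀ i, i < m → Continuous (γ' i)) ∧
      (∀ i, i + 1 < m → γ (i+1) 0 = γ i 1) ∧
      γ 0 0 = y k ∧ γ (m-1) 1 = x k ∧
      ∑ i ∈ Finset.range m, Len (γ i) (γ' i) ≤ L k := by
    intro k
    induction k with
    | zero =>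
      refine ⟨1, fun _ s => y 0 + s • (x 0 - y 0), fun _ _ => x 0 - y 0,
        le_refl 1, fun i _ t => seg_deriv _ _ t, fun i _ => continuous_const,
        fun i hi => absurd hi (by omega), by simp, by simp, ?_⟩
      have := seg_len (y 0) (x 0 - y 0)
      simp only [Finset.sum_range_one]
      simpa [hL_def, hA_def] using this
    | succ k ih =>
      obtain ⟨m, γ, γ', hm, hd, hcont, hmatch, h0, h1, hlen⟩ := ih
      -- continuity of each γ i
      have hγcont : ∀ i, i < m → Continuous (γ i) := by
        intro i hi
        exact continuous_iff_continuousAt.mpr fun t => (hd i hi t).continuousAt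
      -- derivative formula is the fderiv
      have hfd : ∀ (z v : Fin n → ℝ), (J z) *ᵥ v = fderiv ℝ Φ z v := by
        intro z v
        rw [(hJ z).fderiv]; rfl
      refine ⟨m + 1,
        (fun i => if i < m then Φ ∘ γ i else fun s => Φ (x k) + s • w k),
        (fun i => if i < m then (fun t => (J (γ i t)) *ᵥ (γ' i t)) else fun _ => w k),
        le_add_self.trans (le_refl _), ?_, ?_, ?_, ?_, ?_, ?_⟩
      · intro i hi t
        by_cases him : i < m
        · simp only [if_pos him]
          have := (hJ (γ i t)).comp_hasDerivAt t (hd i him t)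
          simpa using this
        · simp only [if_neg him]
          exact seg_deriv _ _ t
      · intro i hi
        by_cases him : i < m
        · simp only [if_pos him]
          have : (fun t => (J (γ i t)) *ᵥ (γ' i t))
              = fun t => fderiv ℝ Φ (γ i t) (γ' i t) := by
            funext t; exact hfd _ _
          rw [this]
          exact ((hΦ.continuous_fderiv one_ne_zero).comp (hγcont i him)).clm_apply (hcont i him)
        · simp only [if_neg him]; exact continuous_const
      · intro i hi
        by_cases him : i + 1 < m
        · have him' : i < m := Nat.lt_of_succ_lt him
          simp only [if_pos him, if_pos him', Function.comp]
          rw [hmatch i him]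
        · have hieq : i = m - 1 := by omega
          have him' : i < m := by omega
          have hnot : ¬ (i + 1 < m) := him
          simp only [if_neg hnot, if_pos him', Function.comp]
          have : γ i 1 = x k := by rw [hieq]; exact h1
          rw [this]; simp
      · have h0m : 0 < m := hm
        simp only [if_pos h0m, Function.comp]
        rw [h0, hy]
      · have : m + 1 - 1 = m := rfl
        rw [this]
        simp only [lt_irrefl, if_neg (lt_irrefl m)]
        rw [hx]; simp
      · -- length bound
        rw [Finset.sum_range_succ]
        have hlast : Len (if m < m then Φ ∘ γ m else fun s => Φ (x k) + s • w k)
            (if m < m then (fun t => (J (γ m t)) *ᵥ (γ' m t)) else fun _ => w k) ≤ D := by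
          simp only [if_neg (lt_irrefl m)]
          calc Len (fun s : ℝ => Φ (x k) + s • w k) (fun _ => w k)
              ≤ Real.sqrt α₂ * euclNorm (w k) := seg_len _ _
            _ ≤ Real.sqrt α₂ * ε := by
                exact mul_le_mul_of_nonneg_left (hw k) (Real.sqrt_nonneg _)
        have hmain : ∑ i ∈ Finset.range m,
            Len (if i < m then Φ ∘ γ i else fun s => Φ (x k) + s • w k)
              (if i < m then (fun t => (J (γ i t)) *ᵥ (γ' i t)) else fun _ => w k)
            ≤ c * L k := by
          have hterm : ∀ i ∈ Finset.range m,
              Len (if i < m then Φ ∘ γ i else fun s => Φ (x k) + s • w k)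
                (if i < m then (fun t => (J (γ i t)) *ᵥ (γ' i t)) else fun _ => w k)
              ≤ c * Len (γ i) (γ' i) := by
            intro i hi'
            have him : i < m := Finset.mem_range.mp hi'
            simp only [if_pos him]
            -- pointwise contraction bound
            have hptwise : ∀ t : ℝ,
                Real.sqrt ((J (γ i t) *ᵥ γ' i t) ⬝ᵥ
                    (M ((Φ ∘ γ i) t)).mulVec (J (γ i t) *ᵥ γ' i t))
                ≤ c * Real.sqrt (γ' i t ⬝ᵥ (M (γ i t)).mulVec (γ' i t)) := by
              intro t
              set z := γ i t
              set v := γ' i t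
              have hpsd := (Matrix.posSemidef_iff_dotProduct_mulVec.mp (hcontr z)).2 v
              have hre : (0:ℝ) ≤ v ⬝ᵥ ((1 - β) • M z - (J z)ᵀ * M (Φ z) * J z).mulVec v := by
                simpa using hpsd
              have hexpand : v ⬝ᵥ ((1 - β) • M z - (J z)ᵀ * M (Φ z) * J z).mulVec v
                  = (1 - β) * (v ⬝ᵥ (M z).mulVec v)
                    - (J z *ᵥ v) ⬝ᵥ (M (Φ z)).mulVec (J z *ᵥ v) := by
                rw [Matrix.sub_mulVec, Matrix.smul_mulVec, dotProduct_sub,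
                  dotProduct_smul, conj_dotProduct]
                simp [smul_eq_mul]
              have hineq : (J z *ᵥ v) ⬝ᵥ (M (Φ z)).mulVec (J z *ᵥ v)
                  ≤ (1 - β) * (v ⬝ᵥ (M z).mulVec v) := by linarith [hre, hexpand.symm.le]
              calc Real.sqrt ((J z *ᵥ v) ⬝ᵥ (M ((Φ ∘ γ i) t)).mulVec (J z *ᵥ v))
                  = Real.sqrt ((J z *ᵥ v) ⬝ᵥ (M (Φ z)).mulVec (J z *ᵥ v)) := rfl
                _ ≤ Real.sqrt ((1 - β) * (v ⬝ᵥ (M z).mulVec v)) := Real.sqrt_le_sqrt hineq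
                _ = c * Real.sqrt (v ⬝ᵥ (M z).mulVec v) := by
                    rw [Real.sqrt_mul hβ']
            -- integrate
            have hc1cont : Continuous fun t => (J (γ i t)) *ᵥ (γ' i t) := by
              have : (fun t => (J (γ i t)) *ᵥ (γ' i t))
                  = fun t => fderiv ℝ Φ (γ i t) (γ' i t) := by
                funext t; exact hfd _ _
              rw [this]
              exact ((hΦ.continuous_fderiv one_ne_zero).comp (hγcont i him)).clm_apply
                (hcont i him)
            have hint1 : IntervalIntegrable
                (fun t => Real.sqrt ((J (γ i t) *ᵥ γ' i t) ⬝ᵥ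
                  (M ((Φ ∘ γ i) t)).mulVec (J (γ i t) *ᵥ γ' i t)))
                MeasureTheory.volume (0:ℝ) 1 :=
              (integrand_cont (Φ ∘ γ i) (fun t => (J (γ i t)) *ᵥ (γ' i t))
                (hΦ.continuous.comp (hγcont i him)) hc1cont).intervalIntegrable _ _
            have hint2 : IntervalIntegrable
                (fun t => c * Real.sqrt (γ' i t ⬝ᵥ (M (γ i t)).mulVec (γ' i t)))
                MeasureTheory.volume (0:ℝ) 1 :=
              (continuous_const.mul (integrand_cont (γ i) (γ' i) (hγcont i him)
                (hcont i him))).intervalIntegrable _ _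
            calc Len (Φ ∘ γ i) (fun t => (J (γ i t)) *ᵥ (γ' i t))
                ≤ ∫ t in (0:ℝ)..1,
                    c * Real.sqrt (γ' i t ⬝ᵥ (M (γ i t)).mulVec (γ' i t)) := by
                  exact intervalIntegral.integral_mono zero_le_one hint1 hint2
                    fun t => hptwise t
              _ = c * Len (γ i) (γ' i) := by
                  rw [hLen_def]
                  exact intervalIntegral.integral_const_mul _ _
          calc ∑ i ∈ Finset.range m,
              Len (if i < m then Φ ∘ γ i else fun s => Φ (x k) + s • w k)
                (if i < m then (fun t => (J (γ i t)) *ᵥ (γ' i t)) else fun _ => w k)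
              ≤ ∑ i ∈ Finset.range m, c * Len (γ i) (γ' i) :=
                Finset.sum_le_sum hterm
            _ = c * ∑ i ∈ Finset.range m, Len (γ i) (γ' i) := by
                rw [Finset.mul_sum]
            _ ≤ c * L k := mul_le_mul_of_nonneg_left hlen hc0
        rw [hLrec]
        exact add_le_add hmain hlast
  -- from chains to the distance bound
  have hsqrt₁ : (0:ℝ) < Real.sqrt α₁ := Real.sqrt_pos.mpr hα₁
  have hbound : ∀ k, euclNorm (x k - y k) ≤ L k / Real.sqrt α₁ := by
    intro k
    obtain ⟨m, γ, γ', hm, hd, hcont, hmatch, h0, h1, hlen⟩ := claim k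
    have hγcont : ∀ i, i < m → Continuous (γ i) := by
      intro i hi
      exact continuous_iff_continuousAt.mpr fun t => (hd i hi t).continuousAt
    have hpiece : ∀ i, i < m →
        euclNorm (γ i 1 - γ i 0) ≤ Len (γ i) (γ' i) / Real.sqrt α₁ := by
      intro i hi
      rw [le_div_iff₀ hsqrt₁]
      have step1 : euclNorm (γ i 1 - γ i 0) ≤ ∫ t in (0:ℝ)..1, euclNorm (γ' i t) :=
        euclNorm_sub_le_integral _ _ (hd i hi) (hcont i hi)
      have step2 : (∫ t in (0:ℝ)..1, euclNorm (γ' i t)) * Real.sqrt α₁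
          ≤ Len (γ i) (γ' i) := by
        rw [← intervalIntegral.integral_mul_const]
        refine intervalIntegral.integral_mono zero_le_one ?_ ?_ fun t => ?_
        · have : Continuous fun t => euclNorm (γ' i t) * Real.sqrt α₁ := by
            have : Continuous fun t => euclNorm (γ' i t) :=
              Real.continuous_sqrt.comp ((hcont i hi).dotProduct (hcont i hi))
            exact this.mul continuous_const
          exact this.intervalIntegrable _ _
        · exact (integrand_cont (γ i) (γ' i) (hγcont i hi)
            (hcont i hi)).intervalIntegrable _ _
        · rw [mul_comm]; exact sqrt_lb _ _
      calc euclNorm (γ i 1 - γ i 0) * Real.sqrt α₁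
          ≤ (∫ t in (0:ℝ)..1, euclNorm (γ' i t)) * Real.sqrt α₁ :=
            mul_le_mul_of_nonneg_right step1 hsqrt₁.le
        _ ≤ Len (γ i) (γ' i) := step2
    have htele := chain_telescope m γ (fun i => Len (γ i) (γ' i) / Real.sqrt α₁)
      hmatch hpiece (m - 1) (by omega)
    have hm1 : m - 1 + 1 = m := by omega
    rw [hm1] at htele
    rw [h0, h1] at htele
    calc euclNorm (x k - y k)
        ≤ ∑ i ∈ Finset.range m, Len (γ i) (γ' i) / Real.sqrt α₁ := htele
      _ = (∑ i ∈ Finset.range m, Len (γ i) (γ' i)) / Real.sqrt α₁ := by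
          rw [Finset.sum_div]
      _ ≤ L k / Real.sqrt α₁ := by gcongr
  -- limit of L
  have hLlim : Filter.Tendsto (fun k => L k / Real.sqrt α₁) Filter.atTop
      (nhds ((D * (1 - c)⁻¹) / Real.sqrt α₁)) := by
    have h1 : Filter.Tendsto (fun k : ℕ => c ^ k) Filter.atTop (nhds 0) :=
      tendsto_pow_atTop_nhds_zero_of_lt_one hc0 hc1
    have h2 : Filter.Tendsto (fun k : ℕ => ∑ i ∈ Finset.range k, c ^ i) Filter.atTop
        (nhds (1 - c)⁻¹) := by
      have := hasSum_geometric_of_lt_one hc0 hc1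
      have htsum := this.tendsto_sum_nat
      simpa using htsum
    have h3 : Filter.Tendsto L Filter.atTop (nhds (0 * A + D * (1 - c)⁻¹)) := by
      rw [hL_def]
      exact ((h1.mul_const A).add (tendsto_const_nhds.mul h2))
    rw [zero_mul, zero_add] at h3
    exact h3.div_const _
  -- conclude with limsup
  have hlimsup : Filter.limsup (fun k => euclNorm (x k - y k)) Filter.atTop
      ≤ (D * (1 - c)⁻¹) / Real.sqrt α₁ := by
    have hub : Filter.limsup (fun k => L k / Real.sqrt α₁) Filter.atTop
        = (D * (1 - c)⁻¹) / Real.sqrt α₁ := hLlim.limsup_eq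
    rw [← hub]
    refine Filter.limsup_le_limsup (Filter.Eventually.of_forall hbound) ?_ ?_
    · refine Filter.IsBoundedUnder.isCoboundedUnder_le ?_
      exact Filter.isBoundedUnder_of ⟨0, fun k => euclNorm_nonneg _⟩
    · exact hLlim.isBoundedUnder_le
  refine hlimsup.trans_eq ?_
  have h1c : (1:ℝ) - c ≠ 0 := by linarith
  have hs1 : Real.sqrt α₁ ≠ 0 := hsqrt₁.ne'
  rw [hD_def]
  simp only [div_eq_mul_inv]
  ring
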